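/- Let R = [a,b] × [c,d] with a < b, c < d, and let H : ℝ² → ℝ² be of class C² on an open neighborhood of R, injective on R, with det DH(x) > 0 for all x ∈ R. Let F be a C¹ vector field on (an open neighborhood of) the image S = H(R). Then the line integral of F along the closed curve H ∘ γ, where γ is a piecewise-C¹ counterclockwise parameterization of ∂R, equals the double integral ∬_S scurl F dA over the image set S = H(R). In other words, Green's theorem holds for S and F. -/

import Mathlib

open MeasureTheory

/-- The Euclidean dot product on `ℝ × ℝ`. -/
def dot (u v : ℝ × ℝ) : ℝ := u.1 * v.1 + u.2 * v.2

lemma clm_expand (L : ℝ × ℝ →L[ℝ] ℝ) (z : ℝ × ℝ) :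
    L z = z.1 * L (1,0) + z.2 * L (0,1) := by
  have : z = z.1 • ((1:ℝ),(0:ℝ)) + z.2 • ((0:ℝ),(1:ℝ)) := by ext <;> simp
  conv_lhs => rw [this, map_add, _root_.map_smul, _root_.map_smul]
  simp

lemma clm_det (A : ℝ × ℝ →L[ℝ] ℝ × ℝ) :
    A.det = (A (1,0)).1 * (A (0,1)).2 - (A (1,0)).2 * (A (0,1)).1 := by
  have : A.det = LinearMap.det (A : ℝ × ℝ →ₗ[ℝ] ℝ × ℝ) := rfl
  rw [this, ← LinearMap.det_toMatrix (Module.Basis.finTwoProd ℝ), Matrix.det_fin_two]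
  simp [LinearMap.toMatrix_apply, Module.Basis.coe_finTwoProd_repr]
  ring

open ContinuousLinearMap in
lemma key_deriv (H : ℝ×ℝ → ℝ×ℝ) (M N : ℝ×ℝ → ℝ) (v p : ℝ×ℝ)
    (hH : DifferentiableAt ℝ H p) (hK : DifferentiableAt ℝ (fun q => fderiv ℝ H q) p)
    (hM : DifferentiableAt ℝ M (H p)) (hN : DifferentiableAt ℝ N (H p)) :
    HasFDerivAt (fun q => M (H q) * (fderiv ℝ H q v).1 + N (H q) * (fderiv ℝ H q v).2)
      ((M (H p) • ((fst ℝ ℝ ℝ).comp ((apply ℝ (ℝ×ℝ) v).comp (fderiv ℝ (fun q => fderiv ℝ H q) p))) +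
        (fderiv ℝ H p v).1 • ((fderiv ℝ M (H p)).comp (fderiv ℝ H p))) +
       (N (H p) • ((snd ℝ ℝ ℝ).comp ((apply ℝ (ℝ×ℝ) v).comp (fderiv ℝ (fun q => fderiv ℝ H q) p))) +
        (fderiv ℝ H p v).2 • ((fderiv ℝ N (H p)).comp (fderiv ℝ H p)))) p := by
  have hMH : HasFDerivAt (fun q => M (H q)) ((fderiv ℝ M (H p)).comp (fderiv ℝ H p)) p :=
    hM.hasFDerivAt.comp p hH.hasFDerivAt
  have hNH : HasFDerivAt (fun q => N (H q)) ((fderiv ℝ N (H p)).comp (fderiv ℝ H p)) p :=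
    hN.hasFDerivAt.comp p hH.hasFDerivAt
  have hv : HasFDerivAt (fun q => fderiv ℝ H q v)
      ((apply ℝ (ℝ×ℝ) v).comp (fderiv ℝ (fun q => fderiv ℝ H q) p)) p :=
    (apply ℝ (ℝ×ℝ) v).hasFDerivAt.comp p hK.hasFDerivAt
  have h1 : HasFDerivAt (fun q => (fderiv ℝ H q v).1)
      ((fst ℝ ℝ ℝ).comp ((apply ℝ (ℝ×ℝ) v).comp (fderiv ℝ (fun q => fderiv ℝ H q) p))) p :=
    (fst ℝ ℝ ℝ).hasFDerivAt.comp p hv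
  have h2 : HasFDerivAt (fun q => (fderiv ℝ H q v).2)
      ((snd ℝ ℝ ℝ).comp ((apply ℝ (ℝ×ℝ) v).comp (fderiv ℝ (fun q => fderiv ℝ H q) p))) p :=
    (snd ℝ ℝ ℝ).hasFDerivAt.comp p hv
  exact (hMH.mul h1).add (hNH.mul h2)

theorem greens_theorem_image_of_rectangle
    (a b c d : ℝ) (hab : a < b) (hcd : c < d)
    (U : Set (ℝ × ℝ)) (hU : IsOpen U)
    (hRU : Set.Icc a b ×ˢ Set.Icc c d ⊆ U)
    (H : ℝ × ℝ → ℝ × ℝ) (hH : ContDiffOn ℝ 2 H U)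
    (hinj : Set.InjOn H (Set.Icc a b ×ˢ Set.Icc c d))
    (hdet : ∀ p ∈ Set.Icc a b ×ˢ Set.Icc c d, 0 < (fderiv ℝ H p).det)
    (V : Set (ℝ × ℝ)) (hV : IsOpen V)
    (hSV : H '' (Set.Icc a b ×ˢ Set.Icc c d) ⊆ V)
    (M N : ℝ × ℝ → ℝ)
    (hM : ContDiffOn ℝ 1 M V) (hN : ContDiffOn ℝ 1 N V) :
    (∫ t in a..b, dot (M (H (t, c)), N (H (t, c))) (deriv (fun s => H (s, c)) t))
        + (∫ t in c..d, dot (M (H (b, t)), N (H (b, t))) (deriv (fun s => H (b, s)) t))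
        - (∫ t in a..b, dot (M (H (t, d)), N (H (t, d))) (deriv (fun s => H (s, d)) t))
        - (∫ t in c..d, dot (M (H (a, t)), N (H (a, t))) (deriv (fun s => H (a, s)) t))
      = ∫ p in H '' (Set.Icc a b ×ˢ Set.Icc c d),
          (fderiv ℝ N p (1, 0) - fderiv ℝ M p (0, 1)) := by
  set R : Set (ℝ × ℝ) := Set.Icc a b ×ˢ Set.Icc c d with hRdef
  have hRm : MeasurableSet R := (measurableSet_Icc.prod measurableSet_Icc)
  set W : Set (ℝ × ℝ) := U ∩ H ⁻¹' V with hWdef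
  have hWo : IsOpen W := hH.continuousOn.isOpen_inter_preimage hU hV
  have hRW : R ⊆ W := fun p hp => ⟨hRU hp, hSV (Set.mem_image_of_mem H hp)⟩
  have hHd : ∀ p ∈ W, DifferentiableAt ℝ H p := fun p hp =>
    (hH.contDiffAt (hU.mem_nhds hp.1)).differentiableAt (by norm_num)
  have hKc : ContDiffOn ℝ 1 (fun q => fderiv ℝ H q) U :=
    hH.fderiv_of_isOpen hU (by norm_num)
  have hKd : ∀ p ∈ W, DifferentiableAt ℝ (fun q => fderiv ℝ H q) p := fun p hp =>
    ((hKc.contDiffAt (hU.mem_nhds hp.1)).differentiableAt one_ne_zero)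
  have hMd : ∀ p ∈ W, DifferentiableAt ℝ M (H p) := fun p hp =>
    (hM.contDiffAt (hV.mem_nhds hp.2)).differentiableAt one_ne_zero
  have hNd : ∀ p ∈ W, DifferentiableAt ℝ N (H p) := fun p hp =>
    (hN.contDiffAt (hV.mem_nhds hp.2)).differentiableAt one_ne_zero
  set P : ℝ × ℝ → ℝ := fun q => M (H q) * (fderiv ℝ H q (1,0)).1 + N (H q) * (fderiv ℝ H q (1,0)).2
    with hPdef
  set Q : ℝ × ℝ → ℝ := fun q => M (H q) * (fderiv ℝ H q (0,1)).1 + N (H q) * (fderiv ℝ H q (0,1)).2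
    with hQdef
  set G : ℝ × ℝ → ℝ := fun q => (fderiv ℝ N (H q) (1,0) - fderiv ℝ M (H q) (0,1)) *
      ((fderiv ℝ H q (1,0)).1 * (fderiv ℝ H q (0,1)).2 -
        (fderiv ℝ H q (1,0)).2 * (fderiv ℝ H q (0,1)).1) with hGdef
  -- continuity
  have cH : ContinuousOn H W := hH.continuousOn.mono Set.inter_subset_left
  have cMH : ContinuousOn (fun q => M (H q)) W :=
    hM.continuousOn.comp cH (fun q hq => hq.2)
  have cNH : ContinuousOn (fun q => N (H q)) W :=
    hN.continuousOn.comp cH (fun q hq => hq.2)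
  have cK : ContinuousOn (fun q => fderiv ℝ H q) W :=
    hKc.continuousOn.mono Set.inter_subset_left
  have cKv : ∀ v : ℝ × ℝ, ContinuousOn (fun q => fderiv ℝ H q v) W := fun v =>
    cK.clm_apply continuousOn_const
  have cP : ContinuousOn P W := (cMH.mul (cKv (1,0)).fst).add (cNH.mul (cKv (1,0)).snd)
  have cQ : ContinuousOn Q W := (cMH.mul (cKv (0,1)).fst).add (cNH.mul (cKv (0,1)).snd)
  have cG : ContinuousOn G W := by
    apply ContinuousOn.mul
    · exact (((hN.continuousOn_fderiv_of_isOpen hV le_rfl).comp cH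
        (fun q hq => hq.2)).clm_apply continuousOn_const).sub
        (((hM.continuousOn_fderiv_of_isOpen hV le_rfl).comp cH
        (fun q hq => hq.2)).clm_apply continuousOn_const)
    · exact ((cKv (1,0)).fst.mul (cKv (0,1)).snd).sub ((cKv (1,0)).snd.mul (cKv (0,1)).fst)
  -- differentiability of P and Q on W
  have hPd : ∀ p ∈ W, HasFDerivAt P _ p := fun p hp =>
    key_deriv H M N (1,0) p (hHd p hp) (hKd p hp) (hMd p hp) (hNd p hp)
  have hQd : ∀ p ∈ W, HasFDerivAt Q _ p := fun p hp =>
    key_deriv H M N (0,1) p (hHd p hp) (hKd p hp) (hMd p hp) (hNd p hp)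
  -- the pointwise curl identity
  have hval : ∀ p ∈ W, fderiv ℝ Q p (1,0) - fderiv ℝ P p (0,1) = G p := by
    intro p hp
    have hsymm : fderiv ℝ (fun q => fderiv ℝ H q) p (1,0) (0,1)
        = fderiv ℝ (fun q => fderiv ℝ H q) p (0,1) (1,0) := by
      have := (hH.contDiffAt (hU.mem_nhds hp.1)).isSymmSndFDerivAt (by norm_num)
      exact this (1,0) (0,1)
    rw [(hPd p hp).fderiv, (hQd p hp).fderiv]
    simp only [ContinuousLinearMap.add_apply, ContinuousLinearMap.smul_apply,
      ContinuousLinearMap.coe_comp', Function.comp_apply, ContinuousLinearMap.apply_apply,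
      ContinuousLinearMap.coe_fst', ContinuousLinearMap.coe_snd', smul_eq_mul, hGdef]
    rw [clm_expand (fderiv ℝ M (H p)) (fderiv ℝ H p (1,0)),
      clm_expand (fderiv ℝ M (H p)) (fderiv ℝ H p (0,1)),
      clm_expand (fderiv ℝ N (H p)) (fderiv ℝ H p (1,0)),
      clm_expand (fderiv ℝ N (H p)) (fderiv ℝ H p (0,1)), hsymm]
    ring
  -- Green's theorem on the rectangle
  have hrect : (∫ x in Set.Icc ((a,c) : ℝ × ℝ) ((b,d) : ℝ × ℝ),
        (fderiv ℝ Q x (1,0) + fderiv ℝ (fun q => -P q) x (0,1))) =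
      (((∫ x in a..b, -P (x, d)) - ∫ x in a..b, -P (x, c)) + ∫ y in c..d, Q (b, y)) -
        ∫ y in c..d, Q (a, y) := by
    have hIccR : Set.Icc ((a,c) : ℝ × ℝ) ((b,d) : ℝ × ℝ) = R := by
      rw [Set.Icc_prod_eq]
    have hsub : Set.Ioo a b ×ˢ Set.Ioo c d ⊆ W := fun p hp =>
      hRW ⟨Set.Ioo_subset_Icc_self hp.1, Set.Ioo_subset_Icc_self hp.2⟩
    have hGi : IntegrableOn G R := (cG.mono hRW).integrableOn_compact
      (isCompact_Icc.prod isCompact_Icc)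
    have hEq : Set.EqOn (fun x => fderiv ℝ Q x (1,0) + fderiv ℝ (fun q => -P q) x (0,1)) G R := by
      intro p hp
      have hp' := hRW hp
      show fderiv ℝ Q p (1,0) + fderiv ℝ (fun q => -P q) p (0,1) = G p
      have hneg : fderiv ℝ (fun q => -P q) p (0,1) = -(fderiv ℝ P p (0,1)) := by
        rw [fderiv_fun_neg]; simp
      rw [hneg, show fderiv ℝ Q p (1,0) + -(fderiv ℝ P p (0,1))
          = fderiv ℝ Q p (1,0) - fderiv ℝ P p (0,1) by ring]
      exact hval p hp'
    apply integral_divergence_prod_Icc_of_hasFDerivAt_off_countable_of_le Q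
      (fun q => -P q) (fderiv ℝ Q) (fderiv ℝ (fun q => -P q)) (a,c) (b,d)
      ⟨hab.le, hcd.le⟩ ∅ Set.countable_empty
    · rw [hIccR]; exact cQ.mono hRW
    · rw [hIccR]; exact (cP.mono hRW).neg
    · intro x hx
      have hx' : x ∈ W := hsub ⟨hx.1.1, hx.1.2⟩
      exact ((hQd x hx').differentiableAt.hasFDerivAt)
    · intro x hx
      have hx' : x ∈ W := hsub ⟨hx.1.1, hx.1.2⟩
      exact (((hPd x hx').differentiableAt.neg).hasFDerivAt)
    · rw [hIccR]
      exact (hGi.congr_fun (fun p hp => (hEq hp).symm) hRm)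
  -- convert the rectangle integral to ∫ G over R
  have hrect2 : (∫ x in Set.Icc ((a,c) : ℝ × ℝ) ((b,d) : ℝ × ℝ),
        (fderiv ℝ Q x (1,0) + fderiv ℝ (fun q => -P q) x (0,1))) = ∫ p in R, G p := by
    rw [Set.Icc_prod_eq]
    apply setIntegral_congr_fun hRm
    intro p hp
    have hp' := hRW hp
    show fderiv ℝ Q p (1,0) + fderiv ℝ (fun q => -P q) p (0,1) = G p
    have hneg : fderiv ℝ (fun q => -P q) p (0,1) = -(fderiv ℝ P p (0,1)) := by
      rw [fderiv_fun_neg]; simp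
    rw [hneg, show fderiv ℝ Q p (1,0) + -(fderiv ℝ P p (0,1))
        = fderiv ℝ Q p (1,0) - fderiv ℝ P p (0,1) by ring]
    exact hval p hp'
  -- change of variables
  have hcov : (∫ p in H '' R, (fderiv ℝ N p (1, 0) - fderiv ℝ M p (0, 1)))
      = ∫ p in R, G p := by
    rw [integral_image_eq_integral_abs_det_fderiv_smul volume hRm
      (fun p hp => ((hHd p (hRW hp)).hasFDerivAt).hasFDerivWithinAt) hinj
      (fun p => fderiv ℝ N p (1, 0) - fderiv ℝ M p (0, 1))]
    apply setIntegral_congr_fun hRm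
    intro p hp
    have hdp := hdet p hp
    show |(fderiv ℝ H p).det| • (fderiv ℝ N (H p) (1, 0) - fderiv ℝ M (H p) (0, 1)) = G p
    rw [smul_eq_mul, abs_of_pos hdp, clm_det]
    ring
  -- the four side integrals
  have side1 : (∫ t in a..b, dot (M (H (t, c)), N (H (t, c))) (deriv (fun s => H (s, c)) t))
      = ∫ t in a..b, P (t, c) := by
    apply intervalIntegral.integral_congr
    intro t ht
    rw [Set.uIcc_of_le hab.le, Set.mem_Icc] at ht
    have hw : ((t, c) : ℝ × ℝ) ∈ W := hRW (by
      simp only [hRdef, Set.mem_prod, Set.mem_Icc]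
      constructor <;> constructor <;> first | exact ht.1 | exact ht.2 | exact le_refl _ | exact hab.le | exact hcd.le)
    have hder : HasDerivAt (fun s => H (s, c)) (fderiv ℝ H (t, c) (1,0)) t :=
      (hHd _ hw).hasFDerivAt.comp_hasDerivAt t ((hasDerivAt_id t).prodMk (hasDerivAt_const t c))
    beta_reduce
    rw [hder.deriv]
    simp [dot]; rfl

  have side2 : (∫ t in c..d, dot (M (H (b, t)), N (H (b, t))) (deriv (fun s => H (b, s)) t))
      = ∫ t in c..d, Q (b, t) := by
    apply intervalIntegral.integral_congr
    intro t ht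
    rw [Set.uIcc_of_le hcd.le, Set.mem_Icc] at ht
    have hw : ((b, t) : ℝ × ℝ) ∈ W := hRW (by
      simp only [hRdef, Set.mem_prod, Set.mem_Icc]
      constructor <;> constructor <;> first | exact ht.1 | exact ht.2 | exact le_refl _ | exact hab.le | exact hcd.le)
    have hder : HasDerivAt (fun s => H (b, s)) (fderiv ℝ H (b, t) (0,1)) t :=
      (hHd _ hw).hasFDerivAt.comp_hasDerivAt t ((hasDerivAt_const t b).prodMk (hasDerivAt_id t))
    beta_reduce
    rw [hder.deriv]
    simp [dot]; rfl

  have side3 : (∫ t in a..b, dot (M (H (t, d)), N (H (t, d))) (deriv (fun s => H (s, d)) t))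
      = ∫ t in a..b, P (t, d) := by
    apply intervalIntegral.integral_congr
    intro t ht
    rw [Set.uIcc_of_le hab.le, Set.mem_Icc] at ht
    have hw : ((t, d) : ℝ × ℝ) ∈ W := hRW (by
      simp only [hRdef, Set.mem_prod, Set.mem_Icc]
      constructor <;> constructor <;> first | exact ht.1 | exact ht.2 | exact le_refl _ | exact hab.le | exact hcd.le)
    have hder : HasDerivAt (fun s => H (s, d)) (fderiv ℝ H (t, d) (1,0)) t :=
      (hHd _ hw).hasFDerivAt.comp_hasDerivAt t ((hasDerivAt_id t).prodMk (hasDerivAt_const t d))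
    beta_reduce
    rw [hder.deriv]
    simp [dot]; rfl

  have side4 : (∫ t in c..d, dot (M (H (a, t)), N (H (a, t))) (deriv (fun s => H (a, s)) t))
      = ∫ t in c..d, Q (a, t) := by
    apply intervalIntegral.integral_congr
    intro t ht
    rw [Set.uIcc_of_le hcd.le, Set.mem_Icc] at ht
    have hw : ((a, t) : ℝ × ℝ) ∈ W := hRW (by
      simp only [hRdef, Set.mem_prod, Set.mem_Icc]
      constructor <;> constructor <;> first | exact ht.1 | exact ht.2 | exact le_refl _ | exact hab.le | exact hcd.le)
    have hder : HasDerivAt (fun s => H (a, s)) (fderiv ℝ H (a, t) (0,1)) t :=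
      (hHd _ hw).hasFDerivAt.comp_hasDerivAt t ((hasDerivAt_const t a).prodMk (hasDerivAt_id t))
    beta_reduce
    rw [hder.deriv]
    simp [dot]; rfl

  rw [side1, side2, side3, side4, hcov, ← hrect2, hrect]
  rw [intervalIntegral.integral_neg, intervalIntegral.integral_neg]
  ring
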